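/- (Character groups of unit filtration quotients.) Let ψ : F → ℂˣ be an additive character (a homomorphism from the additive group of F) which is trivial on p_F and nontrivial on O_F, and let k, r be integers with 0 ≤ k < r ≤ 2k + 1. For a ∈ E with π^{r+d}·a ∈ O_E (i.e. a ∈ p_E^{−(r+d)}), define ψ_{E,a} : U_E^{k+1} → ℂˣ by ψ_{E,a}(x) := ψ(Tr_{E/F}(a·(x − 1))). Then: (1) ψ_{E,a} is a group homomorphism on U_E^{k+1} which is trivial on U_E^{r+1}; (2) ψ_{E,a}(x)·ψ_{E,b}(x) = ψ_{E,a+b}(x) for all x ∈ U_E^{k+1} and a, b ∈ p_E^{−(r+d)}; (3) ψ_{E,a} is trivial on all of U_E^{k+1} if and only if a ∈ p_E^{−(k+d)}; (4) every group homomorphism U_E^{k+1} → ℂˣ which is trivial on U_E^{r+1} equals ψ_{E,a} for some a ∈ p_E^{−(r+d)}. Consequently, a ↦ ψ_{E,a} induces a group isomorphism from the additive quotient p_E^{−(r+d)}/p_E^{−(k+d)} onto the group of homomorphisms U_E^{k+1}/U_E^{r+1} → ℂˣ. -/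

import Mathlib

set_option linter.unusedSectionVars false
set_option maxHeartbeats 1000000


noncomputable section

namespace ADLV

variable {E : Type*} [Field E]

/-- The fixed subfield `F` of the automorphism `τ`. -/
def Fsub (τ : E →+* E) : Subfield E where
  carrier := {x | τ x = x}
  mul_mem' := by
    intro a b ha hb
    simp only [Set.mem_setOf_eq, map_mul] at *
    rw [ha, hb]
  one_mem' := by simp only [Set.mem_setOf_eq, map_one]
  add_mem' := by
    intro a b ha hb
    simp only [Set.mem_setOf_eq, map_add] at *
    rw [ha, hb]
  zero_mem' := by simp only [Set.mem_setOf_eq, map_zero]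
  neg_mem' := by
    intro a ha
    simp only [Set.mem_setOf_eq, map_neg] at *
    rw [ha]
  inv_mem' := by
    intro a ha
    simp only [Set.mem_setOf_eq, map_inv₀] at *
    rw [ha]

/-- The trace `Tr_{E/F}(x) = x + τ(x)`, as an element of the fixed field `F`. -/
def TrF (τ : E →+* E) (hττ : ∀ x : E, τ (τ x) = x) (x : E) : Fsub τ :=
  ⟨x + τ x, by
    have h : τ (x + τ x) = x + τ x := by
      rw [map_add, hττ, add_comm]
    exact h⟩

/-- The character `ψ_{E,a}(x) = ψ(Tr_{E/F}(a (x - 1)))`. -/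
def psiE (τ : E →+* E) (hττ : ∀ x : E, τ (τ x) = x) (ψ : Fsub τ → ℂˣ) (a x : E) : ℂˣ :=
  ψ (TrF τ hττ (a * (x - 1)))

/-- The fractional ideal `p_E^k` as an additive subgroup of `E`. -/
def pSub [CharP E 2] (v : E → WithTop ℤ) (hv0 : v 0 = ⊤)
    (hv_add : ∀ x y : E, min (v x) (v y) ≤ v (x + y)) (k : ℤ) : AddSubgroup E where
  carrier := {x | (k : WithTop ℤ) ≤ v x}
  zero_mem' := by simp [Set.mem_setOf_eq, hv0]
  add_mem' := by
    intro a b ha hb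
    simp only [Set.mem_setOf_eq] at *
    exact le_trans (le_min ha hb) (hv_add a b)
  neg_mem' := by
    intro a ha
    simpa [Set.mem_setOf_eq, CharTwo.neg_eq] using ha

section VLemmas
variable [CharP E 2] (v : E → WithTop ℤ)
  (hv_top : ∀ x : E, v x = ⊤ ↔ x = 0)
  (hv_mul : ∀ x y : E, v (x * y) = v x + v y)
  (hv_add : ∀ x y : E, min (v x) (v y) ≤ v (x + y))

include hv_top in
lemma v_fin (x : E) (hx : x ≠ 0) : ∃ n : ℤ, v x = (n : WithTop ℤ) := by
  have : v x ≠ ⊤ := fun h => hx ((hv_top x).mp h)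
  obtain ⟨n, hn⟩ := WithTop.ne_top_iff_exists.mp this
  exact ⟨n, hn.symm⟩

include hv_top in
lemma v_ne_zero (x : E) (n : ℤ) (hx : v x = (n : WithTop ℤ)) : x ≠ 0 := by
  intro h
  rw [h, (hv_top 0).mpr rfl] at hx
  simp at hx

include hv_top hv_mul in
lemma v_one' : v 1 = 0 := by
  have h := hv_mul 1 1
  rw [mul_one] at h
  obtain ⟨n, hn⟩ := v_fin v hv_top 1 one_ne_zero
  rw [hn] at h
  have : n = n + n := by exact_mod_cast h
  have : n = 0 := by omega
  rw [hn, this]; rfl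

include hv_top hv_mul in
lemma v_inv' (x : E) (n : ℤ) (hx : v x = (n : ℤ)) : v x⁻¹ = ((-n : ℤ) : WithTop ℤ) := by
  have hx0 : x ≠ 0 := v_ne_zero v hv_top x n hx
  have h := hv_mul x x⁻¹
  rw [mul_inv_cancel₀ hx0, v_one' v hv_top hv_mul, hx] at h
  obtain ⟨m, hm⟩ := v_fin v hv_top x⁻¹ (inv_ne_zero hx0)
  rw [hm] at h ⊢
  have : (0 : ℤ) = n + m := by exact_mod_cast h
  have : m = -n := by omega
  rw [this]

include hv_top hv_mul in
lemma v_pow' (x : E) (c : ℤ) (hx : v x = (c : ℤ)) (j : ℕ) :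
    v (x ^ j) = ((j * c : ℤ) : WithTop ℤ) := by
  induction j with
  | zero => simpa using v_one' v hv_top hv_mul
  | succ j ih =>
      rw [pow_succ, hv_mul, ih, hx, ← WithTop.coe_add]
      congr 1
      push_cast
      ring

include hv_top hv_mul in
lemma v_zpow' (x : E) (c : ℤ) (hx : v x = (c : ℤ)) (m : ℤ) :
    v (x ^ m) = ((m * c : ℤ) : WithTop ℤ) := by
  obtain ⟨j, rfl | rfl⟩ := Int.eq_nat_or_neg m
  · rw [zpow_natCast]; exact v_pow' v hv_top hv_mul x c hx j
  · rw [zpow_neg, zpow_natCast]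
    rw [v_inv' v hv_top hv_mul (x ^ j) (j * c) (v_pow' v hv_top hv_mul x c hx j)]
    congr 1
    ring

include hv_add in
lemma v_add_eq_left (x y : E) (h : v x < v y) : v (x + y) = v x := by
  have h1 : v x ≤ v (x + y) := le_trans (le_min le_rfl h.le) (hv_add x y)
  refine le_antisymm ?_ h1
  have hx : x = (x + y) + y := by
    rw [add_assoc, CharTwo.add_self_eq_zero, add_zero]
  have hmin : min (v (x + y)) (v y) ≤ v x := by
    conv_rhs => rw [hx]
    exact hv_add (x + y) y
  rcases le_total (v (x + y)) (v y) with hle | hle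
  · rwa [min_eq_left hle] at hmin
  · rw [min_eq_right hle] at hmin
    exact absurd (lt_of_lt_of_le h hmin) (lt_irrefl _)

variable (τ : E →+* E) (hττ : ∀ x : E, τ (τ x) = x)
  (hv_tau : ∀ x : E, v (τ x) = v x)
  (π : E) (hπ : v π = 1)
  (hv_even : ∀ x : E, τ x = x → ∀ k : ℤ, v x = (k : WithTop ℤ) → Even k)
  (hbasis : ∀ y : E, ∃ c₀ c₁ : E, τ c₀ = c₀ ∧ τ c₁ = c₁ ∧ y = c₀ + c₁ * π)
  (d : ℤ) (hd : 0 < d) (hdodd : Odd d)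
  (ε : E) (hε : ε = τ π / π)
  (hεd : v (ε - 1) = (d : WithTop ℤ))

include hv_top hπ hε in
lemma delta_eq : π + τ π = π * (ε - 1) := by
  have hπ0 : π ≠ 0 := by
    intro h
    rw [h, (hv_top 0).mpr rfl] at hπ
    simp at hπ
  have : τ π = ε * π := by
    rw [hε, div_mul_cancel₀ _ hπ0]
  rw [this, CharTwo.sub_eq_add]
  ring

include hv_top hv_mul hπ hε hεd in
lemma v_delta : v (π + τ π) = ((1 + d : ℤ) : WithTop ℤ) := by
  rw [delta_eq v hv_top τ π hπ ε hε, hv_mul, hπ, hεd]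
  rw [show (1 : WithTop ℤ) = ((1 : ℤ) : WithTop ℤ) from rfl, ← WithTop.coe_add]

include hv_top hv_mul hv_add hπ hv_even in
lemma v_decomp (c₀ c₁ : E) (h₀ : τ c₀ = c₀) (h₁ : τ c₁ = c₁) :
    v (c₀ + c₁ * π) = min (v c₀) (v (c₁ * π)) := by
  by_cases hc₀ : c₀ = 0
  · subst hc₀
    rw [(hv_top 0).mpr rfl, zero_add, min_comm, min_eq_left le_top]
  by_cases hc₁ : c₁ = 0
  · subst hc₁
    rw [zero_mul, add_zero, (hv_top 0).mpr rfl, min_eq_left le_top]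
  obtain ⟨n₀, hn₀⟩ := v_fin v hv_top c₀ hc₀
  obtain ⟨n₁, hn₁⟩ := v_fin v hv_top c₁ hc₁
  have he₀ : Even n₀ := hv_even c₀ h₀ n₀ hn₀
  have he₁ : Even n₁ := hv_even c₁ h₁ n₁ hn₁
  have hv₁ : v (c₁ * π) = ((n₁ + 1 : ℤ) : WithTop ℤ) := by
    rw [hv_mul, hn₁, hπ]; rfl
  have hne : n₀ ≠ n₁ + 1 := by
    rintro rfl
    rcases he₀ with ⟨a, ha⟩; rcases he₁ with ⟨b, hb⟩; omega
  rcases lt_or_gt_of_ne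
      (fun h : v c₀ = v (c₁ * π) => hne (by rw [hn₀, hv₁] at h; exact_mod_cast h)) with h | h
  · rw [v_add_eq_left v hv_add _ _ h, min_eq_left h.le]
  · rw [add_comm, v_add_eq_left v hv_add _ _ h, min_eq_right h.le]

include hv_top hv_mul hv_add hπ hv_even hbasis hε hεd in
lemma trace_ge (z : E) (m : ℤ) (hz : (m : WithTop ℤ) ≤ v z) :
    ((m + d : ℤ) : WithTop ℤ) ≤ v (z + τ z) := by
  obtain ⟨c₀, c₁, h₀, h₁, rfl⟩ := hbasis z
  have hτz : τ (c₀ + c₁ * π) = c₀ + c₁ * τ π := by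
    rw [map_add, map_mul, h₀, h₁]
  have hsum : (c₀ + c₁ * π) + τ (c₀ + c₁ * π) = (c₁ * π) * (ε - 1) := by
    have h2 : (2 : E) = 0 := CharTwo.two_eq_zero
    have hΔ := delta_eq v hv_top τ π hπ ε hε
    rw [hτz]
    linear_combination c₀ * h2 + c₁ * hΔ
  rw [hsum, hv_mul, hεd]
  have h1 : (m : WithTop ℤ) ≤ v (c₁ * π) := by
    refine le_trans hz ?_
    rw [v_decomp v hv_top hv_mul hv_add τ π hπ hv_even c₀ c₁ h₀ h₁]
    exact min_le_right _ _
  calc ((m + d : ℤ) : WithTop ℤ) = (m : WithTop ℤ) + (d : ℤ) := by push_cast; rfl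
    _ ≤ v (c₁ * π) + (d : ℤ) := add_le_add_left h1 _

include hv_top hv_mul hv_tau hττ hπ in
lemma exists_F_elt (n : ℤ) (hn : Even n) :
    ∃ c : E, τ c = c ∧ v c = (n : WithTop ℤ) := by
  have hπ0 : π ≠ 0 := by
    intro h
    rw [h, (hv_top 0).mpr rfl] at hπ
    simp at hπ
  refine ⟨(π * τ π) ^ (n / 2), ?_, ?_⟩
  · rw [map_zpow₀, map_mul, hττ, mul_comm]
  · have hv2 : v (π * τ π) = ((2 : ℤ) : WithTop ℤ) := by
      rw [hv_mul, hv_tau, hπ]; rfl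
    rw [v_zpow' v hv_top hv_mul (π * τ π) 2 hv2 (n / 2)]
    congr 1
    obtain ⟨r, hr⟩ := hn
    omega

variable (ψ : Fsub τ → ℂˣ)
  (hψ_hom : ∀ a b : Fsub τ, ψ (a + b) = ψ a * ψ b)
  (hψ_triv : ∀ x : Fsub τ, ((2 : ℤ) : WithTop ℤ) ≤ v (x : E) → ψ x = 1)
  (hψ_nt : ∃ x : Fsub τ, ((0 : ℤ) : WithTop ℤ) ≤ v (x : E) ∧ ψ x ≠ 1)

include hv_top hv_mul hv_add hττ hπ hv_even hbasis hε hεd hψ_triv in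
lemma psi_trace_one (z : E) (m : ℤ) (hm : 1 ≤ m + d) (hz : (m : WithTop ℤ) ≤ v z) :
    ψ (TrF τ hττ z) = 1 := by
  apply hψ_triv
  show ((2 : ℤ) : WithTop ℤ) ≤ v (z + τ z)
  by_cases hw0 : z + τ z = 0
  · rw [hw0, (hv_top 0).mpr rfl]; exact le_top
  obtain ⟨n, hn⟩ := v_fin v hv_top _ hw0
  have hfix : τ (z + τ z) = z + τ z := by rw [map_add, hττ, add_comm]
  have heven : Even n := hv_even _ hfix n hn
  have hge := trace_ge v hv_top hv_mul hv_add τ π hπ hv_even hbasis d ε hε hεd z m hz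
  rw [hn] at hge ⊢
  have h1 : m + d ≤ n := by exact_mod_cast hge
  have : (2 : ℤ) ≤ n := by
    obtain ⟨t, ht⟩ := heven
    omega
  exact_mod_cast this

include hv_top hv_mul hv_add hττ hv_tau hπ hv_even hbasis hd hdodd hε hεd hψ_nt in
lemma nontriv_small (k : ℤ) (a : E)
    (hna : ¬ ((-(k + d) : ℤ) : WithTop ℤ) ≤ v a) :
    ∃ u : E, ((k + 1 : ℤ) : WithTop ℤ) ≤ v u ∧ ψ (TrF τ hττ (a * u)) ≠ 1 := by
  have h2 : (2 : E) = 0 := CharTwo.two_eq_zero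
  have ha0 : a ≠ 0 := by
    rintro rfl
    exact hna (by rw [(hv_top 0).mpr rfl]; exact le_top)
  obtain ⟨n, hn⟩ := v_fin v hv_top a ha0
  have hnlt : n ≤ -(k + d) - 1 := by
    by_contra h
    push_neg at h
    exact hna (by rw [hn]; exact_mod_cast (by omega : -(k + d) ≤ n))
  obtain ⟨c₀, c₁, h₀, h₁, rfl⟩ := hbasis a
  have hmin := v_decomp v hv_top hv_mul hv_add τ π hπ hv_even c₀ c₁ h₀ h₁
  obtain ⟨xh, hxh0, hxhne⟩ := hψ_nt
  have hxhfix : τ (xh : E) = (xh : E) := xh.2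
  set Δ := π + τ π with hΔdef
  have hΔfix : τ Δ = Δ := by rw [hΔdef, map_add, hττ, add_comm]
  have hΔv : v Δ = ((1 + d : ℤ) : WithTop ℤ) := v_delta v hv_top hv_mul τ π hπ d ε hε hεd
  have hdd : Odd d := hdodd
  rcases min_cases (v c₀) (v (c₁ * π)) with ⟨hmeq, hle⟩ | ⟨hmeq, hlt⟩
  · -- v a = v c₀, choose u = c * w * π
    have hvc₀ : v c₀ = (n : WithTop ℤ) := by rw [hmin, hmeq] at hn; exact hn
    have heven : Even n := hv_even c₀ h₀ n hvc₀
    obtain ⟨c, hcf, hcv⟩ := exists_F_elt v hv_top hv_mul τ hττ hv_tau π hπ (-n - d - 1)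
      (by obtain ⟨p, hp⟩ := heven; obtain ⟨qd, hq⟩ := hdd; exact ⟨-p - qd - 1, by omega⟩)
    have hlt2 : v c₀ < v (c₁ * Δ) := by
      have hcd : v (c₁ * Δ) = v (c₁ * π) + ((d : ℤ) : WithTop ℤ) := by
        rw [hv_mul, hΔv, hv_mul, hπ]
        rw [add_assoc]
        congr 1
      rw [hcd, hvc₀]
      calc ((n : ℤ) : WithTop ℤ) < ((n + d : ℤ) : WithTop ℤ) := by exact_mod_cast (by omega : n < n + d)
        _ = ((n : ℤ) : WithTop ℤ) + ((d : ℤ) : WithTop ℤ) := by push_cast; rfl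
        _ ≤ v (c₁ * π) + ((d : ℤ) : WithTop ℤ) := add_le_add_left (hvc₀ ▸ hle) _
    have hyv : v (c₀ + c₁ * Δ) = (n : WithTop ℤ) := by
      rw [v_add_eq_left v hv_add _ _ hlt2, hvc₀]
    set s := c * Δ * (c₀ + c₁ * Δ) with hsdef
    have hsfix : τ s = s := by
      rw [hsdef, hΔdef]
      simp only [map_mul, map_add, hττ, hcf, h₀, h₁]
      ring
    have hsv : v s = ((0 : ℤ) : WithTop ℤ) := by
      rw [hsdef, hv_mul, hv_mul, hcv, hΔv, hyv, ← WithTop.coe_add, ← WithTop.coe_add]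
      congr 1
      ring
    have hs0 : s ≠ 0 := v_ne_zero v hv_top s 0 hsv
    set w := (xh : E) * s⁻¹ with hwdef
    have hwfix : τ w = w := by rw [hwdef, map_mul, map_inv₀, hsfix, hxhfix]
    have hwv : ((0 : ℤ) : WithTop ℤ) ≤ v w := by
      rw [hwdef, hv_mul, v_inv' v hv_top hv_mul s 0 hsv]
      simpa using hxh0
    refine ⟨c * w * π, ?_, ?_⟩
    · rw [hv_mul, hv_mul, hcv, hπ]
      calc ((k + 1 : ℤ) : WithTop ℤ) ≤ ((-n - d - 1 : ℤ) : WithTop ℤ) + ((0 : ℤ) : WithTop ℤ) + 1 := by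
            rw [← WithTop.coe_add, show ((1:WithTop ℤ)) = ((1:ℤ) : WithTop ℤ) from rfl, ← WithTop.coe_add]
            exact_mod_cast (by omega : k + 1 ≤ -n - d - 1 + 0 + 1)
        _ ≤ ((-n - d - 1 : ℤ) : WithTop ℤ) + v w + 1 :=
            add_le_add_left (add_le_add_right hwv _) _
    · have hTr : TrF τ hττ ((c₀ + c₁ * π) * (c * w * π)) = xh := by
        apply Subtype.ext
        show (c₀ + c₁ * π) * (c * w * π) + τ ((c₀ + c₁ * π) * (c * w * π)) = (xh : E)
        have hτexp : τ ((c₀ + c₁ * π) * (c * w * π)) = (c₀ + c₁ * τ π) * (c * w * τ π) := by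
          rw [map_mul, map_add, map_mul, map_mul, map_mul, h₀, h₁, hcf, hwfix]
        rw [hτexp]
        have hkey : (c₀ + c₁ * π) * (c * w * π) + (c₀ + c₁ * τ π) * (c * w * τ π)
            = w * s := by
          rw [hsdef, hΔdef]
          linear_combination (-(c * w * c₁ * π * τ π)) * h2
        rw [hkey, hwdef]
        exact inv_mul_cancel_right₀ hs0 _
      rw [hTr]
      exact hxhne
  · -- v a = v (c₁ * π), choose u = c * w
    have hvc₁π : v (c₁ * π) = (n : WithTop ℤ) := by rw [hmin, hmeq] at hn; exact hn
    have hc₁0 : c₁ ≠ 0 := by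
      intro h
      rw [h, zero_mul, (hv_top 0).mpr rfl] at hvc₁π
      simp at hvc₁π
    obtain ⟨m, hm⟩ := v_fin v hv_top c₁ hc₁0
    have hm1 : m + 1 = n := by
      rw [hv_mul, hm, hπ] at hvc₁π
      exact_mod_cast hvc₁π
    have hmeven : Even m := hv_even c₁ h₁ m hm
    obtain ⟨c, hcf, hcv⟩ := exists_F_elt v hv_top hv_mul τ hττ hv_tau π hπ (-n - d)
      (by obtain ⟨p, hp⟩ := hmeven; obtain ⟨qd, hq⟩ := hdd; exact ⟨-p - qd - 1, by omega⟩)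
    set s := c * c₁ * Δ with hsdef
    have hsfix : τ s = s := by rw [hsdef, map_mul, map_mul, hcf, h₁, hΔfix]
    have hsv : v s = ((0 : ℤ) : WithTop ℤ) := by
      rw [hsdef, hv_mul, hv_mul, hcv, hm, hΔv, ← WithTop.coe_add, ← WithTop.coe_add]
      congr 1
      omega
    have hs0 : s ≠ 0 := v_ne_zero v hv_top s 0 hsv
    set w := (xh : E) * s⁻¹ with hwdef
    have hwfix : τ w = w := by rw [hwdef, map_mul, map_inv₀, hsfix, hxhfix]
    have hwv : ((0 : ℤ) : WithTop ℤ) ≤ v w := by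
      rw [hwdef, hv_mul, v_inv' v hv_top hv_mul s 0 hsv]
      simpa using hxh0
    refine ⟨c * w, ?_, ?_⟩
    · rw [hv_mul, hcv]
      calc ((k + 1 : ℤ) : WithTop ℤ) ≤ ((-n - d : ℤ) : WithTop ℤ) + ((0 : ℤ) : WithTop ℤ) := by
            rw [← WithTop.coe_add]
            exact_mod_cast (by omega : k + 1 ≤ -n - d + 0)
        _ ≤ ((-n - d : ℤ) : WithTop ℤ) + v w := add_le_add_right hwv _
    · have hTr : TrF τ hττ ((c₀ + c₁ * π) * (c * w)) = xh := by
        apply Subtype.ext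
        show (c₀ + c₁ * π) * (c * w) + τ ((c₀ + c₁ * π) * (c * w)) = (xh : E)
        have hτexp : τ ((c₀ + c₁ * π) * (c * w)) = (c₀ + c₁ * τ π) * (c * w) := by
          rw [map_mul, map_add, map_mul, map_mul, h₀, h₁, hcf, hwfix]
        rw [hτexp]
        have hkey : (c₀ + c₁ * π) * (c * w) + (c₀ + c₁ * τ π) * (c * w) = w * s := by
          rw [hsdef, hΔdef]
          linear_combination (c₀ * c * w) * h2
        rw [hkey, hwdef]
        exact inv_mul_cancel_right₀ hs0 _
      rw [hTr]
      exact hxhne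

end VLemmas

lemma card_dual (G : Type*) [AddCommGroup G] [Finite G] :
    Nat.card (Multiplicative G →* ℂˣ) = Nat.card G := by
  haveI : NeZero (Monoid.exponent (Multiplicative G)) := ⟨Monoid.exponent_ne_zero_of_finite⟩
  obtain ⟨e⟩ := CommGroup.monoidHom_mulEquiv_of_hasEnoughRootsOfUnity (Multiplicative G) ℂ
  exact Nat.card_congr e.toEquiv

theorem statement16 [CharP E 2]
    (τ : E →+* E) (hττ : ∀ x : E, τ (τ x) = x) (hτne : τ ≠ RingHom.id E)
    (v : E → WithTop ℤ)
    (hv_top : ∀ x : E, v x = ⊤ ↔ x = 0)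
    (hv_mul : ∀ x y : E, v (x * y) = v x + v y)
    (hv_add : ∀ x y : E, min (v x) (v y) ≤ v (x + y))
    (hv_tau : ∀ x : E, v (τ x) = v x)
    (π : E) (hπ : v π = 1)
    (hv_even : ∀ x : E, τ x = x → ∀ k : ℤ, v x = (k : WithTop ℤ) → Even k)
    (hbasis : ∀ y : E, ∃ c₀ c₁ : E, τ c₀ = c₀ ∧ τ c₁ = c₁ ∧ y = c₀ + c₁ * π)
    (d : ℤ) (hd : 0 < d) (hdodd : Odd d)
    (ε : E) (hε : ε = τ π / π)
    (hεd : v (ε - 1) = (d : WithTop ℤ))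
    (q : ℕ) (hq : 1 < q)
    (hcard : ∀ a b : ℤ, a ≤ b →
      Nat.card (pSub v ((hv_top 0).mpr rfl) hv_add a ⧸
          (pSub v ((hv_top 0).mpr rfl) hv_add b).addSubgroupOf
            (pSub v ((hv_top 0).mpr rfl) hv_add a)) =
        q ^ (b - a).toNat)
    (ψ : Fsub τ → ℂˣ)
    (hψ_hom : ∀ a b : Fsub τ, ψ (a + b) = ψ a * ψ b)
    (hψ_triv : ∀ x : Fsub τ, ((2 : ℤ) : WithTop ℤ) ≤ v (x : E) → ψ x = 1)
    (hψ_nt : ∃ x : Fsub τ, ((0 : ℤ) : WithTop ℤ) ≤ v (x : E) ∧ ψ x ≠ 1)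
    (k r : ℤ) (hk : 0 ≤ k) (hkr : k < r) (hr : r ≤ 2 * k + 1)
    (a : E) (ha : ((-(r + d) : ℤ) : WithTop ℤ) ≤ v a) :
    (∀ x y : E, ((k + 1 : ℤ) : WithTop ℤ) ≤ v (x - 1) → ((k + 1 : ℤ) : WithTop ℤ) ≤ v (y - 1) →
        psiE τ hττ ψ a (x * y) = psiE τ hττ ψ a x * psiE τ hττ ψ a y) ∧
    (∀ x : E, ((r + 1 : ℤ) : WithTop ℤ) ≤ v (x - 1) → psiE τ hττ ψ a x = 1) ∧
    (∀ b x : E, ((-(r + d) : ℤ) : WithTop ℤ) ≤ v b → ((k + 1 : ℤ) : WithTop ℤ) ≤ v (x - 1) →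
        psiE τ hττ ψ a x * psiE τ hττ ψ b x = psiE τ hττ ψ (a + b) x) ∧
    ((∀ x : E, ((k + 1 : ℤ) : WithTop ℤ) ≤ v (x - 1) → psiE τ hττ ψ a x = 1) ↔
      ((-(k + d) : ℤ) : WithTop ℤ) ≤ v a) ∧
    (∀ χ : E → ℂˣ,
      (∀ x y : E, ((k + 1 : ℤ) : WithTop ℤ) ≤ v (x - 1) → ((k + 1 : ℤ) : WithTop ℤ) ≤ v (y - 1) →
        χ (x * y) = χ x * χ y) →
      (∀ x : E, ((r + 1 : ℤ) : WithTop ℤ) ≤ v (x - 1) → χ x = 1) →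
      ∃ b : E, ((-(r + d) : ℤ) : WithTop ℤ) ≤ v b ∧
        ∀ x : E, ((k + 1 : ℤ) : WithTop ℤ) ≤ v (x - 1) → χ x = psiE τ hττ ψ b x) := by
  have hTr_add : ∀ z w : E, TrF τ hττ (z + w) = TrF τ hττ z + TrF τ hττ w := by
    intro z w
    apply Subtype.ext
    show (z + w) + τ (z + w) = (z + τ z) + (w + τ w)
    rw [map_add]
    ring
  have key_triv : ∀ (b u : E) (mb mu : ℤ), (mb : WithTop ℤ) ≤ v b → (mu : WithTop ℤ) ≤ v u →
      1 ≤ mb + mu + d → ψ (TrF τ hττ (b * u)) = 1 := by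
    intro b u mb mu hb hu h1
    refine psi_trace_one v hv_top hv_mul hv_add τ hττ π hπ hv_even hbasis d ε hε hεd ψ hψ_triv
      (b * u) (mb + mu) (by omega) ?_
    rw [hv_mul, WithTop.coe_add]
    exact add_le_add hb hu
  refine ⟨?_, ?_, ?_, ?_, ?_⟩
  · -- multiplicativity
    intro x y hx hy
    show ψ (TrF τ hττ (a * (x * y - 1))) = ψ (TrF τ hττ (a * (x - 1))) * ψ (TrF τ hττ (a * (y - 1)))
    have e1 : a * (x * y - 1) = a * (x - 1) + a * (y - 1) + (a * (x - 1)) * (y - 1) := by ring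
    have e2 : ψ (TrF τ hττ ((a * (x - 1)) * (y - 1))) = 1 := by
      refine key_triv _ _ (-(r + d) + (k + 1)) (k + 1) ?_ hy (by omega)
      rw [hv_mul, WithTop.coe_add]
      exact add_le_add ha hx
    rw [e1, hTr_add, hTr_add, hψ_hom, hψ_hom, e2, mul_one]
  · -- triviality on U^{r+1}
    intro x hx
    exact key_triv a (x - 1) (-(r + d)) (r + 1) ha hx (by omega)
  · -- additivity in a
    intro b x hb hx
    show ψ (TrF τ hττ (a * (x - 1))) * ψ (TrF τ hττ (b * (x - 1))) = ψ (TrF τ hττ ((a + b) * (x - 1)))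
    rw [show (a + b) * (x - 1) = a * (x - 1) + b * (x - 1) by ring, hTr_add, hψ_hom]
  · -- conductor criterion
    constructor
    · intro H
      by_contra hna
      obtain ⟨u, hu, hne⟩ := nontriv_small v hv_top hv_mul hv_add τ hττ hv_tau π hπ hv_even
        hbasis d hd hdodd ε hε hεd ψ hψ_nt k a hna
      apply hne
      have hh := H (1 + u) (by rwa [add_sub_cancel_left])
      show ψ (TrF τ hττ (a * u)) = 1
      rw [show a * u = a * ((1 + u) - 1) by ring]
      exact hh
    · intro hva x hx
      exact key_triv a (x - 1) (-(k + d)) (k + 1) hva hx (by omega)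
  · -- surjectivity
    intro χ hχm hχt
    set P : ℤ → AddSubgroup E := pSub v ((hv_top 0).mpr rfl) hv_add with hPdef
    set N : AddSubgroup (P (k+1)) := (P (r+1)).addSubgroupOf (P (k+1)) with hNdef
    have hcardG : Nat.card (P (k+1) ⧸ N) = q ^ (r - k).toNat := by
      have h := hcard (k+1) (r+1) (by omega)
      rwa [show r + 1 - (k+1) = r - k by ring] at h
    set NA : AddSubgroup (P (-(r+d))) := (P (-(k+d))).addSubgroupOf (P (-(r+d))) with hNAdef
    have hcardA : Nat.card (P (-(r+d)) ⧸ NA) = q ^ (r - k).toNat := by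
      have h := hcard (-(r+d)) (-(k+d)) (by omega)
      rwa [show -(k+d) - -(r+d) = r - k by ring] at h
    haveI hfinG : Finite (P (k+1) ⧸ N) :=
      Nat.finite_of_card_ne_zero (by rw [hcardG]; exact pow_ne_zero _ (by omega))
    haveI hfinA : Finite (P (-(r+d)) ⧸ NA) :=
      Nat.finite_of_card_ne_zero (by rw [hcardA]; exact pow_ne_zero _ (by omega))
    let gfun : E → (P (k+1) →+ Additive ℂˣ) := fun b =>
      AddMonoidHom.mk' (fun u => Additive.ofMul (ψ (TrF τ hττ (b * (u:E)))))
        (by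
          intro u u'
          show Additive.ofMul (ψ (TrF τ hττ (b * ((u:E) + (u':E))))) = _
          rw [mul_add, hTr_add, hψ_hom]
          rfl)
    have gfun_triv : ∀ b : P (-(r+d)), ∀ u ∈ N, gfun (b:E) u = 0 := by
      intro b u hu
      have hu' : ((r+1 : ℤ) : WithTop ℤ) ≤ v (u:E) := AddSubgroup.mem_addSubgroupOf.mp hu
      show Additive.ofMul (ψ (TrF τ hττ ((b:E) * (u:E)))) = 0
      rw [key_triv (b:E) (u:E) (-(r+d)) (r+1) b.2 hu' (by omega)]
      rfl
    let lift1 : P (-(r+d)) → (Multiplicative (P (k+1) ⧸ N) →* ℂˣ) := fun b =>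
      AddMonoidHom.toMultiplicativeLeft (QuotientAddGroup.lift N (gfun (b:E)) (gfun_triv b))
    have lift1_apply : ∀ (b : P (-(r+d))) (u : P (k+1)),
        lift1 b (Multiplicative.ofAdd (QuotientAddGroup.mk u)) = ψ (TrF τ hττ ((b:E) * (u:E))) :=
      fun b u => rfl
    have Dext : ∀ (φ φ' : Multiplicative (P (k+1) ⧸ N) →* ℂˣ),
        (∀ u : P (k+1), φ (Multiplicative.ofAdd (QuotientAddGroup.mk u))
          = φ' (Multiplicative.ofAdd (QuotientAddGroup.mk u))) → φ = φ' := by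
      intro φ φ' h
      apply MonoidHom.ext
      intro m
      exact QuotientAddGroup.induction_on
        (C := fun z => φ (Multiplicative.ofAdd z) = φ' (Multiplicative.ofAdd z))
        (Multiplicative.toAdd m) h
    let Fhom : P (-(r+d)) →+ Additive (Multiplicative (P (k+1) ⧸ N) →* ℂˣ) :=
      AddMonoidHom.mk' (fun b => Additive.ofMul (lift1 b)) (by
        intro b b'
        have h : lift1 (b + b') = lift1 b * lift1 b' := by
          apply Dext
          intro u
          rw [MonoidHom.mul_apply, lift1_apply, lift1_apply, lift1_apply]
          show ψ (TrF τ hττ (((b:E) + (b':E)) * (u:E))) = _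
          rw [show ((b:E) + (b':E)) * (u:E) = (b:E)*(u:E) + (b':E)*(u:E) by ring, hTr_add, hψ_hom]
        show Additive.ofMul (lift1 (b + b')) = Additive.ofMul (lift1 b) + Additive.ofMul (lift1 b')
        rw [h]
        rfl)
    have Fhom_ker : ∀ b : P (-(r+d)), b ∈ NA → Fhom b = 0 := by
      intro b hb
      have hb' : ((-(k+d) : ℤ) : WithTop ℤ) ≤ v (b:E) := AddSubgroup.mem_addSubgroupOf.mp hb
      show Additive.ofMul (lift1 b) = 0
      have h : lift1 b = 1 := by
        apply Dext
        intro u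
        rw [lift1_apply, MonoidHom.one_apply]
        exact key_triv (b:E) (u:E) (-(k+d)) (k+1) hb' u.2 (by omega)
      rw [h]
      rfl
    let Fbar : P (-(r+d)) ⧸ NA →+ Additive (Multiplicative (P (k+1) ⧸ N) →* ℂˣ) := QuotientAddGroup.lift NA Fhom
      (by intro b hb; exact (AddMonoidHom.mem_ker (f := Fhom)).mpr (Fhom_ker b hb))
    have hFbar_mk : ∀ b : P (-(r+d)), Fbar (QuotientAddGroup.mk b) = Additive.ofMul (lift1 b) :=
      fun b => rfl
    have hinj : Function.Injective Fbar := by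
      rw [injective_iff_map_eq_zero]
      intro x hx
      obtain ⟨b, rfl⟩ := QuotientAddGroup.mk_surjective x
      rw [hFbar_mk] at hx
      have hb1 : lift1 b = 1 := Additive.ofMul.injective hx
      rw [QuotientAddGroup.eq_zero_iff]
      apply AddSubgroup.mem_addSubgroupOf.mpr
      show ((-(k+d) : ℤ) : WithTop ℤ) ≤ v (b:E)
      by_contra hna
      obtain ⟨u, hu, hne⟩ := nontriv_small v hv_top hv_mul hv_add τ hττ hv_tau π hπ hv_even
        hbasis d hd hdodd ε hε hεd ψ hψ_nt k (b:E) hna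
      apply hne
      have heq := congrArg (fun φ : Multiplicative (P (k+1) ⧸ N) →* ℂˣ =>
        φ (Multiplicative.ofAdd (QuotientAddGroup.mk (⟨u, hu⟩ : P (k+1))))) hb1
      rw [lift1_apply] at heq
      simpa using heq
    haveI hfinD : Finite (Multiplicative (P (k+1) ⧸ N) →* ℂˣ) := by
      apply Nat.finite_of_card_ne_zero
      rw [card_dual, hcardG]
      exact pow_ne_zero _ (by omega)
    haveI hfinD' : Finite (Additive (Multiplicative (P (k+1) ⧸ N) →* ℂˣ)) :=
      Finite.of_equiv _ Additive.ofMul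
    have hcardD : Nat.card (Additive (Multiplicative (P (k+1) ⧸ N) →* ℂˣ)) = q ^ (r - k).toNat := by
      have h1 : Nat.card (Additive (Multiplicative (P (k+1) ⧸ N) →* ℂˣ))
          = Nat.card (Multiplicative (P (k+1) ⧸ N) →* ℂˣ) := Nat.card_congr Additive.toMul
      rw [h1, card_dual, hcardG]
    have hbij : Function.Bijective Fbar :=
      (Nat.bijective_iff_injective_and_card Fbar).mpr ⟨hinj, by rw [hcardA, hcardD]⟩
    let gχ : P (k+1) →+ Additive ℂˣ := AddMonoidHom.mk'
      (fun u => Additive.ofMul (χ (1 + (u:E)))) (by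
      intro u u'
      show Additive.ofMul (χ (1 + ((u:E) + (u':E))))
        = Additive.ofMul (χ (1 + (u:E))) + Additive.ofMul (χ (1 + (u':E)))
      have hU : ((k+1:ℤ):WithTop ℤ) ≤ v (u:E) := u.2
      have hV : ((k+1:ℤ):WithTop ℤ) ≤ v (u':E) := u'.2
      have hUV : ((k+1:ℤ):WithTop ℤ) ≤ v ((u:E) + (u':E)) := le_trans (le_min hU hV) (hv_add _ _)
      have h1v : v (1:E) = 0 := v_one' v hv_top hv_mul
      have hy : v (1 + ((u:E) + (u':E))) = ((0:ℤ) : WithTop ℤ) := by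
        rw [v_add_eq_left v hv_add _ _
          (by rw [h1v]; exact lt_of_lt_of_le (by exact_mod_cast (by omega : (0:ℤ) < k+1)) hUV),
          h1v]
        rfl
      set y := 1 + ((u:E) + (u':E)) with hydef
      have hy0 : y ≠ 0 := v_ne_zero v hv_top y 0 hy
      set z := 1 + y⁻¹ * ((u:E) * (u':E)) with hzdef
      have hfact : (1 + (u:E)) * (1 + (u':E)) = y * z := by
        have hc : y * (y⁻¹ * ((u:E) * (u':E))) = (u:E) * (u':E) := by
          rw [← mul_assoc, mul_inv_cancel₀ hy0, one_mul]
        rw [hzdef, mul_add y, mul_one, hc, hydef]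
        ring
      have hz1 : ((r+1:ℤ):WithTop ℤ) ≤ v (z - 1) := by
        rw [hzdef, add_sub_cancel_left, hv_mul, hv_mul, v_inv' v hv_top hv_mul y 0 hy]
        calc ((r+1:ℤ):WithTop ℤ) ≤ ((-0:ℤ):WithTop ℤ) + (((k+1:ℤ):WithTop ℤ) + ((k+1:ℤ):WithTop ℤ)) := by
              rw [← WithTop.coe_add, ← WithTop.coe_add]
              exact_mod_cast (by omega : r+1 ≤ -0 + (k+1+(k+1)))
          _ ≤ _ := add_le_add_right (add_le_add hU hV) _
      have hzk : ((k+1:ℤ):WithTop ℤ) ≤ v (z - 1) :=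
        le_trans (by exact_mod_cast (by omega : (k+1:ℤ) ≤ r+1)) hz1
      have hyk : ((k+1:ℤ):WithTop ℤ) ≤ v (y - 1) := by
        rw [hydef, add_sub_cancel_left]; exact hUV
      have step1 : χ (1 + (u:E)) * χ (1 + (u':E)) = χ y * χ z := by
        rw [← hχm _ _ (by rwa [add_sub_cancel_left]) (by rwa [add_sub_cancel_left]), hfact,
          hχm y z hyk hzk]
      have hfin : χ y = χ (1 + (u:E)) * χ (1 + (u':E)) := by
        rw [step1, hχt z hz1, mul_one]
      show Additive.ofMul (χ y) = _
      rw [hfin]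
      rfl)
    have gχ_triv : ∀ u ∈ N, gχ u = 0 := by
      intro u hu
      have hu' : ((r+1:ℤ):WithTop ℤ) ≤ v (u:E) := AddSubgroup.mem_addSubgroupOf.mp hu
      show Additive.ofMul (χ (1 + (u:E))) = 0
      rw [hχt _ (by rwa [add_sub_cancel_left])]
      rfl
    let χD := AddMonoidHom.toMultiplicativeLeft (QuotientAddGroup.lift N gχ gχ_triv)
    have χD_apply : ∀ u : P (k+1),
        χD (Multiplicative.ofAdd (QuotientAddGroup.mk u)) = χ (1 + (u:E)) := fun u => rfl
    obtain ⟨xA, hxA⟩ := hbij.2 (Additive.ofMul χD)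
    obtain ⟨b, rfl⟩ := QuotientAddGroup.mk_surjective xA
    rw [hFbar_mk] at hxA
    have hlift : lift1 b = χD := Additive.ofMul.injective hxA
    refine ⟨(b:E), b.2, ?_⟩
    intro x hx
    have hu : (x - 1) ∈ P (k+1) := hx
    have heval := congrArg (fun φ : Multiplicative (P (k+1) ⧸ N) →* ℂˣ =>
      φ (Multiplicative.ofAdd (QuotientAddGroup.mk (⟨x - 1, hu⟩ : P (k+1))))) hlift
    rw [lift1_apply, χD_apply] at heval
    show χ x = ψ (TrF τ hττ ((b:E) * (x - 1)))
    have hco : ((⟨x - 1, hu⟩ : P (k+1)) : E) = x - 1 := rfl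
    rw [hco, show (1:E) + (x - 1) = x by ring] at heval
    exact heval.symm


end ADLV
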